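/- Let q = 2^m ≥ 8 and let k be an integer with 3 ≤ k ≤ q/2. Let S = {a_1, …, a_{2k}} be a set of 2k distinct elements of F_q with Σ_{i=1}^{2k} a_i ≠ 0, set λ = (Σ_{i=1}^{2k} a_i)^{−1}, and define v_i = (λ·u_i)^{q/2} for 1 ≤ i ≤ 2k. Then C_k(S,v,∞) is a [2k+1,k]_q almost self-dual code (self-orthogonal of dimension k), and it is either an MDS code or an NMDS code. -/

import Mathlib

open Polynomial Finset

noncomputable section

/-- Hamming weight of a vector. -/
def wt {F : Type*} [Field F] {N : ℕ} (w : Fin N → F) : ℕ := Set.ncard {i | w i ≠ 0}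

/-- The code `C_k(S,v,∞)` as a set of vectors of length `n+1`. -/
def codeSet {F : Type*} [Field F] {n : ℕ} (a v : Fin n → F) (k : ℕ) :
    Set (Fin (n + 1) → F) :=
  {w | ∃ f : F[X], f.natDegree ≤ k ∧ f.coeff (k - 1) = 0 ∧
    w = Fin.snoc (fun i => v i * f.eval (a i)) (f.coeff k)}

/-- The Euclidean dual of a set of vectors. -/
def dualSet {F : Type*} [Field F] {N : ℕ} (C : Set (Fin N → F)) : Set (Fin N → F) :=
  {y | ∀ x ∈ C, ∑ i, x i * y i = 0}

/-- A (nonzero) code has minimum distance `d`: some nonzero codeword has weight `d`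
and every nonzero codeword has weight at least `d`. -/
def IsMinDist {F : Type*} [Field F] {N : ℕ} (C : Set (Fin N → F)) (d : ℕ) : Prop :=
  (∃ w ∈ C, w ≠ 0 ∧ wt w = d) ∧ ∀ w ∈ C, w ≠ 0 → d ≤ wt w

/-- `u i = ∏_{j ≠ i} (a i - a j)⁻¹`. -/
def uCoeff {F : Type*} [Field F] {n : ℕ} (a : Fin n → F) (i : Fin n) : F :=
  ∏ j ∈ Finset.univ.erase i, (a i - a j)⁻¹

/-- The set of Schur (componentwise) products of elements of two codes. -/
def schurSet {F : Type*} [Field F] {N : ℕ} (C D : Set (Fin N → F)) : Set (Fin N → F) :=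
  {w | ∃ c ∈ C, ∃ d ∈ D, w = c * d}

section Aux

variable {F : Type*} [Field F]

lemma coeff_basis {n : ℕ} (a : Fin n → F) (ha : Function.Injective a) (i : Fin n) :
    (Lagrange.basis Finset.univ a i).coeff (n - 1) = uCoeff a i := by
  have hinj : Set.InjOn a (Finset.univ : Finset (Fin n)) := fun x _ y _ h => ha h
  have hd : (Lagrange.basis Finset.univ a i).natDegree = n - 1 := by
    simpa using Lagrange.natDegree_basis hinj (Finset.mem_univ i)
  rw [← hd, coeff_natDegree, Lagrange.basis, leadingCoeff_prod]
  refine Finset.prod_congr rfl fun j hj => ?_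
  have hne : a i ≠ a j := fun h => (Finset.mem_erase.mp hj).1.symm (ha h)
  rw [Lagrange.basisDivisor, leadingCoeff_mul, leadingCoeff_C,
    (monic_X_sub_C (a j)).leadingCoeff, mul_one]

lemma lagrange_sum {n : ℕ} (a : Fin n → F) (ha : Function.Injective a)
    (h : F[X]) (hdeg : h.degree < n) :
    ∑ i, uCoeff a i * h.eval (a i) = h.coeff (n - 1) := by
  have hinj : Set.InjOn a (Finset.univ : Finset (Fin n)) := fun x _ y _ hh => ha hh
  have hcard : (#(Finset.univ : Finset (Fin n)) : WithBot ℕ) = (n : WithBot ℕ) := by simp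
  have := Lagrange.eq_interpolate hinj (by rwa [hcard])
  conv_rhs => rw [this]
  rw [Lagrange.interpolate_apply, finset_sum_coeff]
  refine Finset.sum_congr rfl fun i _ => ?_
  rw [coeff_C_mul, coeff_basis a ha i, mul_comm]

lemma lagrange_sum' {n : ℕ} (hn : 0 < n) (a : Fin n → F) (ha : Function.Injective a)
    (h : F[X]) (hdeg : h.natDegree ≤ n) :
    ∑ i, uCoeff a i * h.eval (a i) = h.coeff (n - 1) + h.coeff n * ∑ i, a i := by
  set P : F[X] := ∏ i : Fin n, (X - C (a i)) with hP
  have hPm : P.Monic := monic_prod_of_monic _ _ fun i _ => monic_X_sub_C (a i)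
  have hPdeg : P.natDegree = n := by
    rw [hP, natDegree_prod_of_monic _ _ fun i _ => monic_X_sub_C (a i)]
    simp
  have hPcoeffn : P.coeff n = 1 := by
    have := hPm.coeff_natDegree
    rwa [hPdeg] at this
  have hPcoeff : P.coeff (n - 1) = -∑ i, a i := by
    have := prod_X_sub_C_coeff_card_pred (Finset.univ : Finset (Fin n)) a (by simpa using hn)
    simpa using this
  set r : F[X] := h - C (h.coeff n) * P with hr
  have hrdeg : r.degree < n := by
    rw [degree_lt_iff_coeff_zero]
    intro m hm
    rw [hr, coeff_sub, coeff_C_mul]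
    rcases eq_or_lt_of_le hm with he | hlt
    · rw [← he, hPcoeffn, mul_one, sub_self]
    · have h1 : h.coeff m = 0 := coeff_eq_zero_of_natDegree_lt (lt_of_le_of_lt hdeg hlt)
      have h2 : P.coeff m = 0 := coeff_eq_zero_of_natDegree_lt (hPdeg ▸ hlt)
      rw [h1, h2, mul_zero, sub_zero]
  have hPeval : ∀ i, P.eval (a i) = 0 := by
    intro i
    rw [hP, eval_prod]
    exact Finset.prod_eq_zero (Finset.mem_univ i) (by simp)
  have hre : ∀ i, r.eval (a i) = h.eval (a i) := by
    intro i; rw [hr]; simp [hPeval i]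
  have hsum := lagrange_sum a ha r hrdeg
  have : ∑ i, uCoeff a i * h.eval (a i) = ∑ i, uCoeff a i * r.eval (a i) :=
    Finset.sum_congr rfl fun i _ => by rw [hre i]
  rw [this, hsum, hr, coeff_sub, coeff_C_mul, hPcoeff]
  ring

def expo (k : ℕ) (i : Fin k) : ℕ := if (i : ℕ) = k - 1 then k else (i : ℕ)

lemma expo_le {k : ℕ} (i : Fin k) : expo k i ≤ k := by
  unfold expo; split <;> omega

lemma expo_ne {k : ℕ} (hk : 1 ≤ k) (i : Fin k) : expo k i ≠ k - 1 := by
  unfold expo; split <;> omega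

lemma expo_inj {k : ℕ} : Function.Injective (expo k) := by
  intro i j h
  have hi := i.isLt; have hj := j.isLt
  unfold expo at h
  split at h <;> split at h <;> [skip; skip; skip; skip] <;> exact Fin.ext (by omega)

lemma expo_eq_iff {k : ℕ} (i : Fin k) : expo k i = k ↔ (i : ℕ) = k - 1 := by
  have hi := i.isLt; unfold expo; split <;> omega

def polyOf (k : ℕ) (c : Fin k → F) : F[X] := ∑ i, C (c i) * X ^ expo k i

lemma coeff_polyOf {k : ℕ} (c : Fin k → F) (j : ℕ) :
    (polyOf k c).coeff j = ∑ i, if expo k i = j then c i else 0 := by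
  rw [polyOf, finset_sum_coeff]
  refine Finset.sum_congr rfl fun i _ => ?_
  rw [coeff_C_mul, coeff_X_pow, mul_ite, mul_one, mul_zero]
  by_cases h : expo k i = j
  · rw [if_pos h, if_pos h.symm]
  · rw [if_neg h, if_neg (Ne.symm h)]

lemma coeff_polyOf_expo {k : ℕ} (c : Fin k → F) (i : Fin k) :
    (polyOf k c).coeff (expo k i) = c i := by
  rw [coeff_polyOf]
  rw [Finset.sum_eq_single i (fun j _ hj => if_neg fun h => hj (expo_inj h)) (by simp)]
  exact if_pos rfl

lemma natDegree_polyOf {k : ℕ} (c : Fin k → F) : (polyOf k c).natDegree ≤ k := by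
  rw [natDegree_le_iff_coeff_eq_zero]
  intro N hN
  rw [coeff_polyOf]
  exact Finset.sum_eq_zero fun i _ => if_neg (by have := expo_le i; omega)

lemma coeff_polyOf_pred {k : ℕ} (hk : 1 ≤ k) (c : Fin k → F) :
    (polyOf k c).coeff (k - 1) = 0 := by
  rw [coeff_polyOf]
  exact Finset.sum_eq_zero fun i _ => if_neg (expo_ne hk i)

lemma polyOf_eq {k : ℕ} (hk : 1 ≤ k) (f : F[X]) (hdeg : f.natDegree ≤ k)
    (hc : f.coeff (k - 1) = 0) : polyOf k (fun i => f.coeff (expo k i)) = f := by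
  ext j
  rw [coeff_polyOf]
  by_cases hj : ∃ i : Fin k, expo k i = j
  · obtain ⟨i, rfl⟩ := hj
    rw [Finset.sum_eq_single i (fun b _ hb => if_neg fun h => hb (expo_inj h)) (by simp),
      if_pos rfl]
  · push_neg at hj
    rw [Finset.sum_eq_zero fun i _ => if_neg (hj i)]
    -- j is not an expo value: j = k-1 or j > k
    rcases lt_trichotomy j (k - 1) with h1 | h1 | h1
    · exact absurd (show expo k ⟨j, by omega⟩ = j by simp [expo, Nat.ne_of_lt h1]) (hj _)
    · rw [← h1] at hc; exact hc.symm
    · by_cases h2 : j = k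
      · exact absurd (show expo k ⟨k - 1, by omega⟩ = j by simp [expo, h2]) (hj _)
      · exact (coeff_eq_zero_of_natDegree_lt (by omega)).symm

lemma polyOf_add {k : ℕ} (c c' : Fin k → F) :
    polyOf k (c + c') = polyOf k c + polyOf k c' := by
  rw [polyOf, polyOf, polyOf, ← Finset.sum_add_distrib]
  exact Finset.sum_congr rfl fun i _ => by rw [Pi.add_apply, C_add, add_mul]

lemma polyOf_smul {k : ℕ} (t : F) (c : Fin k → F) :
    polyOf k (t • c) = C t * polyOf k c := by
  rw [polyOf, polyOf, Finset.mul_sum]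
  exact Finset.sum_congr rfl fun i _ => by
    rw [Pi.smul_apply, smul_eq_mul, C_mul, mul_assoc]

/-- The encoding linear map. -/
def encode {n : ℕ} (a v : Fin n → F) (k : ℕ) : (Fin k → F) →ₗ[F] (Fin (n + 1) → F) where
  toFun c := Fin.snoc (fun i => v i * (polyOf k c).eval (a i)) ((polyOf k c).coeff k)
  map_add' c c' := by
    funext x
    refine Fin.lastCases ?_ (fun i => ?_) x
    · simp [polyOf_add]
    · simp [polyOf_add, mul_add]
  map_smul' t c := by
    funext x
    refine Fin.lastCases ?_ (fun i => ?_) x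
    · simp [polyOf_smul]
    · simp [polyOf_smul]; ring

lemma codeSet_eq_range {n : ℕ} (a v : Fin n → F) {k : ℕ} (hk : 1 ≤ k) :
    codeSet a v k = ↑(LinearMap.range (encode a v k)) := by
  ext w
  constructor
  · rintro ⟨f, hdeg, hc, rfl⟩
    refine ⟨fun i => f.coeff (expo k i), ?_⟩
    simp only [encode, LinearMap.coe_mk, AddHom.coe_mk, polyOf_eq hk f hdeg hc]
  · rintro ⟨c, rfl⟩
    exact ⟨polyOf k c, natDegree_polyOf c, coeff_polyOf_pred hk c, rfl⟩

lemma encode_injective {n : ℕ} (a v : Fin n → F) {k : ℕ} (ha : Function.Injective a)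
    (hv : ∀ i, v i ≠ 0) (hkn : k < n) : Function.Injective (encode a v k) := by
  rw [← LinearMap.ker_eq_bot]
  rw [Submodule.eq_bot_iff]
  intro c hc
  rw [LinearMap.mem_ker] at hc
  have hz : ∀ i : Fin n, (polyOf k c).eval (a i) = 0 := by
    intro i
    have := congrFun hc (Fin.castSucc i)
    simp only [encode, LinearMap.coe_mk, AddHom.coe_mk, Fin.snoc_castSucc, Pi.zero_apply] at this
    exact (mul_eq_zero.mp this).resolve_left (hv i)
  have hp : polyOf k c = 0 :=
    Polynomial.eq_zero_of_natDegree_lt_card_of_eval_eq_zero _ ha hz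
      (lt_of_le_of_lt (natDegree_polyOf c) (by simpa using hkn))
  funext i
  rw [← coeff_polyOf_expo c i, hp, coeff_zero, Pi.zero_apply]


open Classical in
lemma wt_eq_card {N : ℕ} (w : Fin N → F) : wt w = #(univ.filter fun i => w i ≠ 0) := by
  rw [wt, ← Set.ncard_coe_finset]
  congr 1
  ext i
  simp

open Classical in
lemma wt_snoc {n : ℕ} (g : Fin n → F) (t : F) :
    wt (Fin.snoc g t : Fin (n + 1) → F)
      = #(univ.filter fun i => g i ≠ 0) + (if t ≠ 0 then 1 else 0) := by
  rw [wt_eq_card, Finset.card_filter, Fin.sum_univ_castSucc, Finset.card_filter]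
  simp

open Classical in
lemma card_eval_ne_zero {n k : ℕ} (a : Fin n → F) (ha : Function.Injective a) (f : F[X])
    (hf : f ≠ 0) (hdeg : f.natDegree ≤ k) :
    n - k ≤ #(univ.filter fun i => f.eval (a i) ≠ 0) := by
  have h1 : #(univ.filter fun i => f.eval (a i) = 0) ≤ k := by
    calc #(univ.filter fun i => f.eval (a i) = 0)
        = #((univ.filter fun i => f.eval (a i) = 0).image a) :=
          (Finset.card_image_of_injective _ ha).symm
      _ ≤ #f.roots.toFinset := by
          refine Finset.card_le_card ?_
          intro x hx
          simp only [Finset.mem_image, Finset.mem_filter, Finset.mem_univ, true_and] at hx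
          obtain ⟨i, hi, rfl⟩ := hx
          rw [Multiset.mem_toFinset, mem_roots hf]
          exact hi
      _ ≤ Multiset.card f.roots := Multiset.toFinset_card_le _
      _ ≤ f.natDegree := f.card_roots'
      _ ≤ k := hdeg
  have h2 := Finset.card_filter_add_card_filter_not
    (s := (univ : Finset (Fin n))) (p := fun i => f.eval (a i) = 0)
  simp only [Finset.card_univ, Fintype.card_fin] at h2
  have h3 : #(univ.filter fun i => ¬ f.eval (a i) = 0)
      = #(univ.filter fun i => f.eval (a i) ≠ 0) := rfl
  omega


lemma pairing {k : ℕ} (hk3 : 3 ≤ k) (a v : Fin (2 * k) → F) (ha : Function.Injective a)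
    (lam : F) (hlam : ∑ i, a i = lam⁻¹) (hlam0 : lam ≠ 0)
    (hv2 : ∀ i, v i ^ 2 = lam * uCoeff a i)
    (hch : ∀ x : F, x + x = 0)
    (f g : F[X]) (hf : f.natDegree ≤ k) (hf1 : f.coeff (k - 1) = 0)
    (hg : g.natDegree ≤ k) (hg1 : g.coeff (k - 1) = 0) :
    ∑ i : Fin (2 * k + 1),
      (Fin.snoc (fun i => v i * f.eval (a i)) (f.coeff k) : Fin (2 * k + 1) → F) i *
      (Fin.snoc (fun i => v i * g.eval (a i)) (g.coeff k) : Fin (2 * k + 1) → F) i = 0 := by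
  rw [Fin.sum_univ_castSucc]
  simp only [Fin.snoc_castSucc, Fin.snoc_last]
  have hterm : ∀ i : Fin (2 * k), (v i * f.eval (a i)) * (v i * g.eval (a i))
      = lam * (uCoeff a i * (f * g).eval (a i)) := by
    intro i
    have : (v i * f.eval (a i)) * (v i * g.eval (a i))
        = v i ^ 2 * (f.eval (a i) * g.eval (a i)) := by ring
    rw [this, hv2 i, eval_mul]
    ring
  rw [Finset.sum_congr rfl fun i _ => hterm i, ← Finset.mul_sum,
    lagrange_sum' (by omega) a ha (f * g) (natDegree_mul_le.trans (by omega))]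
  have hc1 : (f * g).coeff (2 * k - 1) = 0 := by
    rw [coeff_mul]
    refine Finset.sum_eq_zero fun p hp => ?_
    rw [Finset.HasAntidiagonal.mem_antidiagonal] at hp
    by_cases h1 : k < p.1
    · rw [coeff_eq_zero_of_natDegree_lt (lt_of_le_of_lt hf h1), zero_mul]
    · by_cases h2 : k < p.2
      · rw [coeff_eq_zero_of_natDegree_lt (lt_of_le_of_lt hg h2), mul_zero]
      · have : p.1 = k - 1 ∨ p.2 = k - 1 := by omega
        rcases this with h | h
        · rw [h, hf1, zero_mul]
        · rw [h, hg1, mul_zero]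
  have hc2 : (f * g).coeff (2 * k) = f.coeff k * g.coeff k := by
    rw [coeff_mul]
    rw [Finset.sum_eq_single (k, k) (fun p hp hne => ?_) (fun h => absurd ?_ h)]
    · rw [Finset.HasAntidiagonal.mem_antidiagonal] at hp
      by_cases h1 : k < p.1
      · rw [coeff_eq_zero_of_natDegree_lt (lt_of_le_of_lt hf h1), zero_mul]
      · by_cases h2 : k < p.2
        · rw [coeff_eq_zero_of_natDegree_lt (lt_of_le_of_lt hg h2), mul_zero]
        · exact absurd (Prod.ext (by omega) (by omega)) hne
    · rw [Finset.HasAntidiagonal.mem_antidiagonal]; omega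
  rw [hc1, hc2, hlam, zero_add]
  have : lam * (f.coeff k * g.coeff k * lam⁻¹) = f.coeff k * g.coeff k := by
    field_simp
  rw [this]
  exact hch _

open Classical in
lemma weight_lower {k : ℕ} (hk3 : 3 ≤ k) (a v : Fin (2 * k) → F) (ha : Function.Injective a)
    (hv0 : ∀ i, v i ≠ 0) {w : Fin (2 * k + 1) → F} (hw : w ∈ codeSet a v k) (hw0 : w ≠ 0) :
    k + 1 ≤ wt w := by
  obtain ⟨f, hdeg, hc1, rfl⟩ := hw
  have hf0 : f ≠ 0 := by
    rintro rfl
    apply hw0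
    funext x
    refine Fin.lastCases ?_ (fun i => ?_) x <;> simp
  rw [wt_snoc]
  have hfilter : (univ.filter fun i : Fin (2 * k) => v i * f.eval (a i) ≠ 0)
      = univ.filter fun i => f.eval (a i) ≠ 0 := by
    refine Finset.filter_congr fun i _ => ?_
    simp [hv0 i]
  rw [hfilter]
  by_cases hck : f.coeff k = 0
  · have hdeg2 : f.natDegree ≤ k - 2 := by
      rw [natDegree_le_iff_coeff_eq_zero]
      intro N hN
      rcases lt_trichotomy N k with h | h | h
      · have : N = k - 1 := by omega
        rw [this]; exact hc1
      · rw [h]; exact hck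
      · exact coeff_eq_zero_of_natDegree_lt (by omega)
    have := card_eval_ne_zero a ha f hf0 hdeg2
    have h2 : 2 * k - (k - 2) = k + 2 := by omega
    omega
  · have := card_eval_ne_zero a ha f hf0 hdeg
    have h2 : 2 * k - k = k := by omega
    rw [if_pos hck]
    omega

open Classical in
lemma weight_upper_exists {k : ℕ} (hk3 : 3 ≤ k) (a v : Fin (2 * k) → F)
    (ha : Function.Injective a) :
    ∃ w ∈ codeSet a v k, w ≠ 0 ∧ wt w ≤ k + 2 := by
  obtain ⟨T, -, hTcard⟩ := Finset.exists_subset_card_eq (s := (univ : Finset (Fin (2 * k)))) (n := k - 1)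
    (by simp; omega)
  set b : F := -∑ i ∈ T, a i with hb
  set f : F[X] := (X - C b) * ∏ i ∈ T, (X - C (a i)) with hf
  have hmono : ∀ i ∈ T, ((X : F[X]) - C (a i)).Monic := fun i _ => monic_X_sub_C (a i)
  have hPm : (∏ i ∈ T, ((X : F[X]) - C (a i))).Monic := monic_prod_of_monic _ _ hmono
  have hm : f.Monic := (monic_X_sub_C b).mul hPm
  have hPdeg : (∏ i ∈ T, ((X : F[X]) - C (a i))).natDegree = k - 1 := by
    rw [natDegree_prod_of_monic _ _ hmono]
    simp [natDegree_X_sub_C, hTcard]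
  have hdeg : f.natDegree = k := by
    rw [hf, (monic_X_sub_C b).natDegree_mul hPm, natDegree_X_sub_C, hPdeg]
    omega
  have hck : f.coeff k = 1 := by
    have := hm.coeff_natDegree
    rwa [hdeg] at this
  have hc1 : f.coeff (k - 1) = 0 := by
    have hnc : f.coeff (k - 1) = f.nextCoeff := by
      rw [nextCoeff, if_neg (by omega : ¬ f.natDegree = 0), hdeg]
    rw [hnc, hf, Monic.nextCoeff_mul (monic_X_sub_C b) hPm, nextCoeff_X_sub_C,
      prod_X_sub_C_nextCoeff, hb]
    ring
  refine ⟨Fin.snoc (fun i => v i * f.eval (a i)) (f.coeff k), ⟨f, hdeg.le, hc1, rfl⟩, ?_, ?_⟩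
  · intro h
    have := congrFun h (Fin.last (2 * k))
    rw [Fin.snoc_last, hck] at this
    exact one_ne_zero this
  · rw [wt_snoc]
    have hsub : (univ.filter fun i : Fin (2 * k) => v i * f.eval (a i) ≠ 0) ⊆ univ \ T := by
      intro i hi
      rw [Finset.mem_filter] at hi
      rw [Finset.mem_sdiff]
      refine ⟨Finset.mem_univ i, fun hiT => hi.2 ?_⟩
      have : f.eval (a i) = 0 := by
        rw [hf, eval_mul, eval_prod, Finset.prod_eq_zero hiT (by simp), mul_zero]
      rw [this, mul_zero]
    have hcard : #(univ \ T) = k + 1 := by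
      rw [Finset.card_sdiff_of_subset (Finset.subset_univ T), hTcard]
      simp; omega
    have := Finset.card_le_card hsub
    split <;> omega

open Classical in
lemma dual_lower {k : ℕ} (hk3 : 3 ≤ k) (a v : Fin (2 * k) → F) (ha : Function.Injective a)
    (hv0 : ∀ i, v i ≠ 0) {y : Fin (2 * k + 1) → F}
    (hy : ∀ x ∈ codeSet a v k, ∑ i, x i * y i = 0) (hy0 : y ≠ 0) : k ≤ wt y := by
  by_contra hlt
  push_neg at hlt
  have hmono : ∀ r : ℕ, r ≤ k → r ≠ k - 1 →
      (∑ i : Fin (2 * k), (v i * a i ^ r) * y (Fin.castSucc i))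
        + (X ^ r : F[X]).coeff k * y (Fin.last (2 * k)) = 0 := by
    intro r hr hne
    have hmem : (Fin.snoc (fun i => v i * (X ^ r : F[X]).eval (a i))
        ((X ^ r : F[X]).coeff k) : Fin (2 * k + 1) → F) ∈ codeSet a v k :=
      ⟨X ^ r, by simp [natDegree_X_pow, hr], by rw [coeff_X_pow, if_neg fun h => hne h.symm], rfl⟩
    have h0 := hy _ hmem
    rw [Fin.sum_univ_castSucc] at h0
    simp only [Fin.snoc_castSucc, Fin.snoc_last, eval_pow, eval_X] at h0
    exact h0
  have hmono' : ∀ r : ℕ, r ≤ k - 2 →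
      ∑ i : Fin (2 * k), (v i * y (Fin.castSucc i)) * a i ^ r = 0 := by
    intro r hr
    have h1 := hmono r (by omega) (by omega)
    rw [coeff_X_pow, if_neg (by omega), zero_mul, add_zero] at h1
    rw [← h1]
    exact Finset.sum_congr rfl fun i _ => by ring
  have hpoly : ∀ h : F[X], h.natDegree ≤ k - 2 →
      ∑ i : Fin (2 * k), (v i * y (Fin.castSucc i)) * h.eval (a i) = 0 := by
    intro h hh
    have hexp : ∀ i : Fin (2 * k), (v i * y (Fin.castSucc i)) * h.eval (a i)
        = ∑ r ∈ Finset.range (k - 1), h.coeff r * ((v i * y (Fin.castSucc i)) * a i ^ r) := by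
      intro i
      rw [eval_eq_sum_range' (n := k - 1) (by omega), Finset.mul_sum]
      exact Finset.sum_congr rfl fun r _ => by ring
    rw [Finset.sum_congr rfl fun i _ => hexp i, Finset.sum_comm]
    refine Finset.sum_eq_zero fun r hr => ?_
    rw [Finset.mem_range] at hr
    rw [← Finset.mul_sum, hmono' r (by omega), mul_zero]
  set T' := univ.filter (fun i : Fin (2 * k) => y (Fin.castSucc i) ≠ 0) with hT'
  have hT'card : #T' ≤ k - 1 := by
    have himg : T'.image Fin.castSucc ⊆ univ.filter (fun i : Fin (2 * k + 1) => y i ≠ 0) := by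
      intro x hx
      simp only [hT', Finset.mem_image, Finset.mem_filter, Finset.mem_univ, true_and] at hx ⊢
      obtain ⟨i, hi, rfl⟩ := hx
      exact hi
    have h1 : #T' = #(T'.image Fin.castSucc) :=
      (Finset.card_image_of_injective _ (Fin.castSucc_injective _)).symm
    have h2 := Finset.card_le_card himg
    rw [← wt_eq_card] at h2
    omega
  have hzero : ∀ j : Fin (2 * k), y (Fin.castSucc j) = 0 := by
    intro j
    by_contra hj0
    have hjT : j ∈ T' := by simp [hT', hj0]
    set h : F[X] := ∏ i ∈ T'.erase j, (X - C (a i)) with hh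
    have hmonic : ∀ i ∈ T'.erase j, ((X : F[X]) - C (a i)).Monic := fun i _ => monic_X_sub_C _
    have hhdeg : h.natDegree ≤ k - 2 := by
      rw [hh, natDegree_prod_of_monic _ _ hmonic]
      simp only [natDegree_X_sub_C, Finset.sum_const, smul_eq_mul, mul_one]
      have := Finset.card_erase_of_mem hjT
      omega
    have hs := hpoly h hhdeg
    have hsingle : ∑ i : Fin (2 * k), (v i * y (Fin.castSucc i)) * h.eval (a i)
        = (v j * y (Fin.castSucc j)) * h.eval (a j) := by
      refine Finset.sum_eq_single j (fun i _ hij => ?_) (fun hj => absurd (Finset.mem_univ j) hj)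
      by_cases hiT : i ∈ T'
      · have : h.eval (a i) = 0 := by
          rw [hh, eval_prod]
          exact Finset.prod_eq_zero (Finset.mem_erase.mpr ⟨hij, hiT⟩) (by simp)
        rw [this, mul_zero]
      · have : y (Fin.castSucc i) = 0 := by
          by_contra hne
          exact hiT (by simp [hT', hne])
        rw [this, mul_zero, zero_mul]
    rw [hsingle] at hs
    have hev : h.eval (a j) ≠ 0 := by
      rw [hh, eval_prod]
      refine Finset.prod_ne_zero_iff.mpr fun i hi => ?_
      simp only [eval_sub, eval_X, eval_C]
      exact sub_ne_zero_of_ne fun hEq => (Finset.mem_erase.mp hi).1 ((ha hEq).symm)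
    rcases mul_eq_zero.mp hs with h1 | h1
    · rcases mul_eq_zero.mp h1 with h2 | h2
      · exact hv0 j h2
      · exact hj0 h2
    · exact hev h1
  have hk' := hmono k le_rfl (by omega)
  rw [coeff_X_pow, if_pos rfl, one_mul] at hk'
  rw [Finset.sum_eq_zero (fun i _ => by rw [hzero i, mul_zero]), zero_add] at hk'
  apply hy0
  funext x
  refine Fin.lastCases hk' (fun i => hzero i) x


open Classical in
lemma dual_weight_k {k : ℕ} (hk3 : 3 ≤ k) (a v : Fin (2 * k) → F)
    (ha : Function.Injective a) (hv0 : ∀ i, v i ≠ 0)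
    {c₀ : Fin (2 * k + 1) → F} (hc₀ : c₀ ∈ codeSet a v k) (hc₀0 : c₀ ≠ 0)
    (hwt : wt c₀ = k + 1) :
    ∃ y ∈ dualSet (codeSet a v k), y ≠ 0 ∧ wt y ≤ k := by
  set Z : Finset (Fin (2 * k + 1)) := univ.filter (fun i => c₀ i = 0) with hZ
  have hZcard : #Z = k := by
    have h2 : #Z + wt c₀ = 2 * k + 1 := by
      rw [hZ, wt_eq_card, Finset.card_filter, Finset.card_filter, ← Finset.sum_add_distrib]
      have h3 : ∀ i : Fin (2 * k + 1),
          ((if c₀ i = 0 then 1 else 0) + if c₀ i ≠ 0 then 1 else 0 : ℕ) = 1 := by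
        intro i
        by_cases h : c₀ i = 0 <;> simp [h]
      rw [Finset.sum_congr rfl fun i _ => h3 i]
      simp
    omega
  set Ψ : (Fin k → F) →ₗ[F] (↥Z → F) :=
    (LinearMap.funLeft F F (fun i : ↥Z => (i : Fin (2 * k + 1)))).comp (encode a v k) with hΨ
  have hc₀r : c₀ ∈ LinearMap.range (encode a v k) := by
    have h := hc₀
    rw [codeSet_eq_range a v (show 1 ≤ k by omega)] at h
    exact h
  obtain ⟨cc, hcc⟩ := LinearMap.mem_range.mp hc₀r
  have hcc0 : cc ≠ 0 := by rintro rfl; rw [map_zero] at hcc; exact hc₀0 hcc.symm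
  have hccker : Ψ cc = 0 := by
    funext i
    have hiZ : c₀ ↑i = 0 := (Finset.mem_filter.mp i.2).2
    simp only [hΨ, LinearMap.comp_apply, LinearMap.funLeft_apply, hcc]
    exact hiZ
  have hfinZ : Module.finrank F (↥Z → F) = k := by
    rw [Module.finrank_pi, Fintype.card_coe, hZcard]
  have hlt : LinearMap.range Ψ < ⊤ := by
    rw [lt_top_iff_ne_top]
    intro h
    have hrk := LinearMap.finrank_range_add_finrank_ker Ψ
    have hkerpos : 0 < Module.finrank F ↥(LinearMap.ker Ψ) := by
      rw [Module.finrank_pos_iff_exists_ne_zero]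
      refine ⟨⟨cc, LinearMap.mem_ker.mpr hccker⟩, fun hEq => hcc0 ?_⟩
      simpa using congrArg Subtype.val hEq
    rw [h, finrank_top, hfinZ, Module.finrank_fin_fun] at hrk
    omega
  obtain ⟨φ, hφ0, hφ⟩ := Submodule.exists_dual_map_eq_bot_of_lt_top hlt inferInstance
  set y : Fin (2 * k + 1) → F := fun i =>
    if h : i ∈ Z then φ (fun i' : ↥Z => if (⟨i, h⟩ : ↥Z) = i' then 1 else 0) else 0 with hy
  have hyzero : ∀ i, i ∉ Z → y i = 0 := fun i hi => dif_neg hi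
  have hybasis : ∀ j : ↥Z, y ↑j = φ (fun i' : ↥Z => if j = i' then 1 else 0) := by
    intro j
    have h1 : y ↑j
        = φ (fun i' : ↥Z => if (⟨(↑j : Fin (2 * k + 1)), j.2⟩ : ↥Z) = i' then 1 else 0) :=
      dif_pos j.2
    rwa [Subtype.coe_eta] at h1
  have hphi : ∀ g : ↥Z → F, φ g = ∑ j : ↥Z, g j * y ↑j := by
    intro g
    rw [LinearMap.pi_apply_eq_sum_univ φ g]
    exact Finset.sum_congr rfl fun j _ => by rw [hybasis j, smul_eq_mul]
  have hydual : y ∈ dualSet (codeSet a v k) := by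
    intro x hx
    have hxr : x ∈ LinearMap.range (encode a v k) := by
      have h := hx
      rw [codeSet_eq_range a v (show 1 ≤ k by omega)] at h
      exact h
    obtain ⟨cc', hcc'⟩ := LinearMap.mem_range.mp hxr
    have hrange : φ (Ψ cc') = 0 := by
      have hmem : φ (Ψ cc') ∈ Submodule.map φ (LinearMap.range Ψ) :=
        Submodule.mem_map_of_mem ⟨cc', rfl⟩
      rw [hφ] at hmem
      exact hmem
    have hΨx : Ψ cc' = fun j : ↥Z => x ↑j := by
      funext j
      simp only [hΨ, LinearMap.comp_apply, LinearMap.funLeft_apply, hcc']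
    rw [hΨx, hphi] at hrange
    rw [← Finset.sum_subset (Finset.subset_univ Z)
      (fun i _ hiZ => by rw [hyzero i hiZ, mul_zero]),
      ← Finset.sum_coe_sort Z (fun i => x i * y i)]
    exact hrange
  have hyne : y ≠ 0 := by
    intro hEq
    apply hφ0
    apply LinearMap.ext
    intro g
    rw [hphi g, LinearMap.zero_apply]
    exact Finset.sum_eq_zero fun j _ => by rw [hEq, Pi.zero_apply, mul_zero]
  have hywt : wt y ≤ k := by
    have hsub : {i | y i ≠ 0} ⊆ (↑Z : Set (Fin (2 * k + 1))) := by
      intro i hi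
      by_contra hiZ
      exact hi (hyzero i (by simpa using hiZ))
    have h1 : wt y ≤ (↑Z : Set (Fin (2 * k + 1))).ncard :=
      Set.ncard_le_ncard hsub (Finset.finite_toSet Z)
    rwa [Set.ncard_coe_finset, hZcard] at h1
  exact ⟨y, hydual, hyne, hywt⟩

end Aux

theorem stmt16 {F : Type*} [Field F] [Fintype F] (m k : ℕ)
    (hcard : Fintype.card F = 2 ^ m) (h8 : 8 ≤ Fintype.card F)
    (hk3 : 3 ≤ k) (hk : k ≤ Fintype.card F / 2)
    (a : Fin (2 * k) → F) (ha : Function.Injective a)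
    (hsum : ∑ i, a i ≠ 0)
    (lam : F) (hlam : lam = (∑ i, a i)⁻¹)
    (v : Fin (2 * k) → F)
    (hv : ∀ i, v i = (lam * uCoeff a i) ^ (Fintype.card F / 2)) :
    codeSet a v k ⊆ dualSet (codeSet a v k) ∧
      Module.finrank F (Submodule.span F (codeSet a v k)) = k ∧
      (IsMinDist (codeSet a v k) (k + 2) ∨
        (IsMinDist (codeSet a v k) (k + 1) ∧ IsMinDist (dualSet (codeSet a v k)) k)) := by

  -- characteristic 2 facts
  have hm3 : 3 ≤ m := by
    have h1 : (2 : ℕ) ^ 3 ≤ 2 ^ m := by rw [← hcard]; simpa using h8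
    exact (Nat.pow_le_pow_iff_right (by norm_num)).mp h1
  have hp2 : ringChar F = 2 := by
    obtain ⟨n, hp, hc2⟩ := FiniteField.card F (ringChar F)
    have hdvd : ringChar F ∣ 2 ^ m := by
      rw [← hcard, hc2]
      exact dvd_pow_self _ n.2.ne'
    exact (Nat.prime_dvd_prime_iff_eq hp Nat.prime_two).mp (hp.dvd_of_dvd_pow hdvd)
  haveI hchar : CharP F 2 := hp2 ▸ ringChar.charP F
  have hch : ∀ x : F, x + x = 0 := fun x => CharTwo.add_self_eq_zero x
  have hq2 : Fintype.card F / 2 * 2 = Fintype.card F := by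
    have h1 : Fintype.card F = 2 ^ (m - 1) * 2 := by
      rw [hcard, ← pow_succ]; congr 1; omega
    rw [h1, Nat.mul_div_cancel _ (by norm_num)]
  have hsq : ∀ x : F, (x ^ (Fintype.card F / 2)) ^ 2 = x := by
    intro x
    rw [← pow_mul, hq2, FiniteField.pow_card]
  -- facts about v, lam, u
  have hu0 : ∀ i, uCoeff a i ≠ 0 := by
    intro i
    refine Finset.prod_ne_zero_iff.mpr fun j hj => ?_
    exact inv_ne_zero (sub_ne_zero_of_ne fun h => (Finset.mem_erase.mp hj).1 (ha h).symm)
  have hlam0 : lam ≠ 0 := by rw [hlam]; exact inv_ne_zero hsum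
  have hlaminv : ∑ i, a i = lam⁻¹ := by rw [hlam, inv_inv]
  have hv2 : ∀ i, v i ^ 2 = lam * uCoeff a i := by intro i; rw [hv i]; exact hsq _
  have hv0 : ∀ i, v i ≠ 0 := by
    intro i h
    exact (mul_ne_zero hlam0 (hu0 i)) (by rw [← hv2 i, h]; exact zero_pow two_ne_zero)
  refine ⟨?_, ?_, ?_⟩
  · -- self-orthogonality
    rintro y ⟨g, hg, hg1, rfl⟩ x ⟨f, hf, hf1, rfl⟩
    exact pairing hk3 a v ha lam hlaminv hlam0 hv2 hch f g hf hf1 hg hg1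
  · -- dimension
    rw [codeSet_eq_range a v (show 1 ≤ k by omega), Submodule.span_eq,
      LinearMap.finrank_range_of_inj (encode_injective a v ha hv0 (by omega))]
    exact Module.finrank_fin_fun F
  · -- minimum distance dichotomy
    by_cases hex : ∃ w ∈ codeSet a v k, w ≠ 0 ∧ wt w = k + 1
    · right
      obtain ⟨c₀, hc₀, hc₀0, hwtc₀⟩ := hex
      refine ⟨⟨⟨c₀, hc₀, hc₀0, hwtc₀⟩,
        fun w hw hw0 => weight_lower hk3 a v ha hv0 hw hw0⟩, ?_⟩
      obtain ⟨y, hy, hy0, hywt⟩ := dual_weight_k hk3 a v ha hv0 hc₀ hc₀0 hwtc₀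
      have hlow : k ≤ wt y := dual_lower hk3 a v ha hv0 hy hy0
      exact ⟨⟨y, hy, hy0, le_antisymm hywt hlow⟩,
        fun z hz hz0 => dual_lower hk3 a v ha hv0 hz hz0⟩
    · left
      push_neg at hex
      obtain ⟨w, hw, hw0, hwle⟩ := weight_upper_exists hk3 a v ha
      have h1 : k + 1 ≤ wt w := weight_lower hk3 a v ha hv0 hw hw0
      have h2 : wt w ≠ k + 1 := hex w hw hw0
      refine ⟨⟨w, hw, hw0, by omega⟩, fun z hz hz0 => ?_⟩
      have h3 := weight_lower hk3 a v ha hv0 hz hz0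
      have h4 := hex z hz hz0
      omega
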